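/- The adjoint A* : y = (η_1,…,η_M) ↦ (Σ_m α_{m1} * η_m, …, Σ_m α_{mC} * η_m) of the multi-channel correlation operator is an isometry if and only if Σ_{c=1}^C α_{mc} ⋆ α_{m'c} equals the Kronecker delta δ when m = m' and 0 when m ≠ m'. -/

import Mathlib

/-- 2D convolution: (α * ξ)[i,j] = Σ_{p,q} α[p,q]·ξ[i-p, j-q]. -/
noncomputable def conv (α ξ : ℤ × ℤ → ℝ) : ℤ × ℤ → ℝ :=
  fun z => ∑ᶠ p : ℤ × ℤ, α p * ξ (z.1 - p.1, z.2 - p.2)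

/-- 2D correlation: (α ⋆ ξ)[i,j] = Σ_{p,q} α[p,q]·ξ[i+p, j+q]. -/
noncomputable def corr (α ξ : ℤ × ℤ → ℝ) : ℤ × ℤ → ℝ :=
  fun z => ∑ᶠ p : ℤ × ℤ, α p * ξ (z.1 + p.1, z.2 + p.2)

/-- ℓ² inner product of 2D signals. -/
noncomputable def ip (f g : ℤ × ℤ → ℝ) : ℝ := ∑ᶠ z : ℤ × ℤ, f z * g z

/-- Kronecker delta on ℤ×ℤ. -/
def kdelta : ℤ × ℤ → ℝ := fun z => if z = (0, 0) then 1 else 0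

abbrev R2 := AddMonoidAlgebra ℝ (ℤ × ℤ)

instance : FunLike R2 (ℤ × ℤ) ℝ where
  coe F := ⇑F.coeff
  coe_injective := fun _ _ h => AddMonoidAlgebra.coeff_injective (DFunLike.coe_injective h)

lemma R2_apply (F : R2) (p : ℤ × ℤ) : F p = F.coeff p := rfl

lemma R2_coe_zero : ⇑(0 : R2) = 0 := rfl

lemma R2_sum_apply {ι : Type*} (s : Finset ι) (f : ι → R2) (z : ℤ × ℤ) :
    (∑ i ∈ s, f i) z = ∑ i ∈ s, f i z := by
  rw [R2_apply, AddMonoidAlgebra.coeff_sum, Finsupp.finset_sum_apply]; rfl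

noncomputable def ρ : R2 →+* R2 := AddMonoidAlgebra.mapDomainRingHom ℝ (negAddMonoidHom (α := ℤ × ℤ))

lemma rho_apply (F : R2) (p : ℤ × ℤ) : ρ F p = F (-p) := by
  show Finsupp.mapDomain _ F.coeff p = F.coeff (-p)
  have : (⇑(negAddMonoidHom (α := ℤ × ℤ))) = ⇑(Equiv.neg (ℤ × ℤ)) := rfl
  rw [this, Finsupp.mapDomain_equiv_apply]
  simp

lemma mul_apply' (F G : R2) (z : ℤ × ℤ) : (F * G) z = ∑ p ∈ F.coeff.support, F p * G (z - p) := by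
  show (F * G).coeff z = ∑ p ∈ F.coeff.support, F.coeff p * G.coeff (z - p)
  rw [AddMonoidAlgebra.coeff_mul, Finsupp.sum]
  refine Finset.sum_congr rfl fun p _ => ?_
  rw [Finsupp.sum]
  simp_rw [← eq_sub_iff_add_eq']
  rw [Finset.sum_ite_eq' G.coeff.support (z - p) (fun q => F.coeff p * G.coeff q)]
  split_ifs with h
  · rfl
  · rw [Finsupp.notMem_support_iff.mp h, mul_zero]

lemma mul_apply_finsum (F G : R2) (z : ℤ × ℤ) : (F * G) z = ∑ᶠ p, F p * G (z - p) := by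
  rw [mul_apply']
  refine (finsum_eq_sum_of_support_subset _ ?_).symm
  intro p hp
  simp only [Function.mem_support] at hp
  simp only [Finset.coe_sort_coe, Finset.mem_coe, Finsupp.mem_support_iff]
  intro h; apply hp; rw [R2_apply, h, zero_mul]

lemma convF (F G : R2) : conv ⇑F ⇑G = ⇑(F * G) := by
  funext z
  rw [conv, mul_apply_finsum]
  refine finsum_congr fun p => ?_
  congr 1

lemma corrF (F G : R2) : corr ⇑F ⇑G = ⇑(ρ F * G) := by
  funext z
  rw [corr, mul_apply_finsum]
  have := finsum_comp_equiv (Equiv.neg (ℤ × ℤ)) (f := fun p => ρ F p * G (z - p))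
  rw [← this]
  refine finsum_congr fun p => ?_
  rw [rho_apply]
  simp only [Equiv.neg_apply, neg_neg, sub_neg_eq_add]
  congr 1

lemma ipF (F G : R2) : ip ⇑F ⇑G = (ρ F * G) 0 := by
  rw [mul_apply_finsum, ip]
  have := finsum_comp_equiv (Equiv.neg (ℤ × ℤ)) (f := fun p => ρ F p * G (0 - p))
  rw [← this]
  refine finsum_congr fun p => ?_
  rw [rho_apply]
  simp

lemma kdeltaF : kdelta = ⇑(1 : R2) := by
  funext z
  rw [kdelta, AddMonoidAlgebra.one_def, R2_apply, AddMonoidAlgebra.coeff_single, Finsupp.single_apply]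
  by_cases h : z = ((0:ℤ), (0:ℤ)) <;> simp [h, eq_comm, Prod.ext_iff] <;>
    exact fun h1 h2 => h (Prod.ext h1 h2)

noncomputable def toF (f : ℤ × ℤ → ℝ) (hf : (Function.support f).Finite) : R2 :=
  AddMonoidAlgebra.ofCoeff (Finsupp.ofSupportFinite f hf)

lemma toF_coe (f : ℤ × ℤ → ℝ) (hf : (Function.support f).Finite) : ⇑(toF f hf) = f := rfl

lemma main_comp {C M : ℕ} (α : Fin M → Fin C → ℤ × ℤ → ℝ)
    (hα : ∀ m c, (Function.support (α m c)).Finite) (Y Y' : Fin M → R2) :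
    ∑ c : Fin C, ip (fun z => ∑ m : Fin M, conv (α m c) (⇑(Y m)) z)
        (fun z => ∑ m : Fin M, conv (α m c) (⇑(Y' m)) z)
      = (∑ m : Fin M, ∑ m' : Fin M, ρ (Y m) * Y' m' *
          ∑ c : Fin C, ρ (toF (α m c) (hα m c)) * toF (α m' c) (hα m' c)) 0 := by
  set A : Fin M → Fin C → R2 := fun m c => toF (α m c) (hα m c) with hA
  have hconv : ∀ m c (Y : Fin M → R2), conv (α m c) ⇑(Y m) = ⇑(A m c * Y m) :=
    fun m c Y => convF (A m c) (Y m)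
  have h1 : ∀ c (Y : Fin M → R2),
      (fun z => ∑ m : Fin M, conv (α m c) (⇑(Y m)) z) = ⇑(∑ m : Fin M, A m c * Y m) := by
    intro c Y; funext z
    rw [R2_sum_apply]
    exact Finset.sum_congr rfl fun m _ => congrFun (hconv m c Y) z
  simp_rw [h1, ipF]
  rw [← R2_sum_apply]
  congr 1
  simp_rw [map_sum, map_mul, Finset.sum_mul_sum, Finset.mul_sum]
  rw [Finset.sum_comm]
  refine Finset.sum_congr rfl fun m _ => ?_
  rw [Finset.sum_comm]
  exact Finset.sum_congr rfl fun m' _ => Finset.sum_congr rfl fun c _ => by simp only [hA]; ring_nf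

lemma ip_eq (f g : ℤ × ℤ → ℝ) (hf : (Function.support f).Finite)
    (hg : (Function.support g).Finite) :
    ip f g = (ρ (toF f hf) * toF g hg) 0 := ipF (toF f hf) (toF g hg)

lemma corr_eq (f g : ℤ × ℤ → ℝ) (hf : (Function.support f).Finite)
    (hg : (Function.support g).Finite) :
    corr f g = ⇑(ρ (toF f hf) * toF g hg) := corrF (toF f hf) (toF g hg)

theorem adjoint_isometry_iff_coorthogonal_kernel (C M : ℕ)
    (α : Fin M → Fin C → ℤ × ℤ → ℝ)
    (hα : ∀ m c, (Function.support (α m c)).Finite) :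
    (∀ y y' : Fin M → ℤ × ℤ → ℝ,
      (∀ m, (Function.support (y m)).Finite) → (∀ m, (Function.support (y' m)).Finite) →
      ∑ c : Fin C, ip (fun z => ∑ m : Fin M, conv (α m c) (y m) z)
          (fun z => ∑ m : Fin M, conv (α m c) (y' m) z)
        = ∑ m : Fin M, ip (y m) (y' m))
    ↔ (∀ m m' : Fin M,
        (fun z => ∑ c : Fin C, corr (α m c) (α m' c) z)
          = if m = m' then kdelta else 0) := by
  set K : Fin M → Fin M → R2 :=
    fun m m' => ∑ c : Fin C, ρ (toF (α m c) (hα m c)) * toF (α m' c) (hα m' c) with hK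
  have hKfun : ∀ m m', (fun z => ∑ c : Fin C, corr (α m c) (α m' c) z) = ⇑(K m m') := by
    intro m m'; funext z
    rw [hK, R2_sum_apply]
    exact Finset.sum_congr rfl fun c _ =>
      congrFun (corr_eq (α m c) (α m' c) (hα m c) (hα m' c)) z
  have hdel : ∀ m m' : Fin M,
      (if m = m' then kdelta else 0) = ⇑(if m = m' then (1 : R2) else 0) := by
    intro m m'; split_ifs
    · exact kdeltaF
    · rfl
  constructor
  · -- isometry → kernel condition
    intro h m0 m'0
    have key : K m0 m'0 = if m0 = m'0 then (1 : R2) else 0 := by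
      refine DFunLike.ext _ _ fun w => ?_
      set s1 : R2 := AddMonoidAlgebra.single w 1 with hs1
      set s0 : R2 := AddMonoidAlgebra.single 0 1 with hs0
      set Y : Fin M → R2 := fun m => if m = m0 then s1 else 0 with hY
      set Y' : Fin M → R2 := fun m => if m = m'0 then s0 else 0 with hY'
      have hy : ∀ m, (Function.support (⇑(Y m))).Finite := fun m => (Y m).coeff.finite_support
      have hy' : ∀ m, (Function.support (⇑(Y' m))).Finite := fun m => (Y' m).coeff.finite_support
      have heq := (main_comp α hα Y Y').symm.trans (h (fun m => ⇑(Y m)) (fun m => ⇑(Y' m)) hy hy')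
      have hL : (∑ m : Fin M, ∑ m' : Fin M, ρ (Y m) * Y' m' * K m m')
          = ρ s1 * s0 * K m0 m'0 := by
        simp only [hY, hY', apply_ite ρ, map_zero, ite_mul, zero_mul, mul_ite, mul_zero,
          Finset.sum_ite_eq', Finset.mem_univ, if_true]
      have hR : (∑ m : Fin M, ip (⇑(Y m)) (⇑(Y' m)))
          = if m'0 = m0 then (ρ s1 * s0) 0 else 0 := by
        simp_rw [ipF]
        simp only [hY, hY', apply_ite ρ, map_zero, ite_mul, zero_mul, mul_ite, mul_zero,
          apply_ite (fun F : R2 => F 0), R2_coe_zero, Pi.zero_apply,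
          Finset.sum_ite_eq', Finset.mem_univ, if_true]
      rw [hL] at heq
      rw [hR] at heq
      have hρs : ρ s1 = AddMonoidAlgebra.single (-w) (1:ℝ) := by
        rw [hs1]
        show AddMonoidAlgebra.mapDomain _ _ = _
        rw [AddMonoidAlgebra.mapDomain_single]
        rfl
      have hone : s0 = (1 : R2) := rfl
      rw [hρs, hone, mul_one] at heq
      have hsm : (AddMonoidAlgebra.single (-w) (1:ℝ) * K m0 m'0) 0 = K m0 m'0 w := by
        rw [R2_apply, R2_apply, AddMonoidAlgebra.coeff_single_mul_apply]
        simp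
      rw [hsm] at heq
      rw [heq]
      by_cases hm : m0 = m'0 <;> by_cases hw : w = 0 <;>
        simp [hm, hw, AddMonoidAlgebra.coeff_single, Finsupp.single_apply,
          AddMonoidAlgebra.one_def, apply_ite (fun F : R2 => F w), eq_comm, R2_apply]
    rw [hKfun, hdel, key]
  · -- kernel condition → isometry
    intro h y y' hy hy'
    have hKval : ∀ m m', K m m' = if m = m' then (1 : R2) else 0 := by
      intro m m'
      have := (hKfun m m').symm.trans ((h m m').trans (hdel m m'))
      exact DFunLike.ext _ _ fun z => congrFun this z
    have h1 : ∀ m, y m = ⇑(toF (y m) (hy m)) := fun m => rfl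
    have h1' : ∀ m, y' m = ⇑(toF (y' m) (hy' m)) := fun m => rfl
    calc ∑ c : Fin C, ip (fun z => ∑ m : Fin M, conv (α m c) (y m) z)
          (fun z => ∑ m : Fin M, conv (α m c) (y' m) z)
        = (∑ m : Fin M, ∑ m' : Fin M,
            ρ (toF (y m) (hy m)) * toF (y' m') (hy' m') * K m m') 0 :=
          main_comp α hα (fun m => toF (y m) (hy m)) (fun m => toF (y' m) (hy' m))
      _ = (∑ m : Fin M, ρ (toF (y m) (hy m)) * toF (y' m) (hy' m)) 0 := by
          congr 1
          refine Finset.sum_congr rfl fun m _ => ?_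
          simp_rw [hKval, mul_ite, mul_one, mul_zero]
          rw [Finset.sum_ite_eq Finset.univ m
            (fun m' => ρ (toF (y m) (hy m)) * toF (y' m') (hy' m'))]
          simp
      _ = ∑ m : Fin M, ip (y m) (y' m) := by
          rw [R2_sum_apply]
          exact Finset.sum_congr rfl fun m _ => (ip_eq (y m) (y' m) (hy m) (hy' m)).symm
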